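/- Let X* and X be positive semidefinite Hermitian M×M matrices with tr(X*) ≤ 1, tr(X) ≤ 1, and X positive definite with tr(X) < 1. Define d_KL(X*, X) = tr(X*(log X* − log X)) + (1 − tr X*) log((1 − tr X*)/(1 − tr X)). Then d_KL(X*, X) ≥ ¼ ‖X* − X‖₁², where ‖·‖₁ denotes the trace (nuclear) norm. -/

import Mathlib

open scoped Matrix ComplexOrder

/-- Matrix logarithm of a Hermitian matrix via the spectral decomposition
(junk value `0` for non-Hermitian matrices). -/
noncomputable def matLog {M : ℕ} (X : Matrix (Fin M) (Fin M) ℂ) :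
    Matrix (Fin M) (Fin M) ℂ :=
  if h : X.IsHermitian then
    (h.eigenvectorUnitary : Matrix (Fin M) (Fin M) ℂ) *
      Matrix.diagonal (fun i => (Real.log (h.eigenvalues i) : ℂ)) *
      star (h.eigenvectorUnitary : Matrix (Fin M) (Fin M) ℂ)
  else 0

/-- Trace (nuclear) norm of a Hermitian matrix: the sum of the absolute values of
its eigenvalues (junk value `0` for non-Hermitian matrices). -/
noncomputable def traceNorm {M : ℕ} (X : Matrix (Fin M) (Fin M) ℂ) : ℝ :=
  if h : X.IsHermitian then ∑ i, |h.eigenvalues i| else 0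


lemma sinh_le_mul_cosh {x : ℝ} (hx : 0 ≤ x) : Real.sinh x ≤ x * Real.cosh x := by
  have hd : ∀ y : ℝ, HasDerivAt (fun z : ℝ => z * Real.cosh z - Real.sinh z)
      (y * Real.sinh y) y := by
    intro y
    have h2 := ((hasDerivAt_id' y).mul (Real.hasDerivAt_cosh y)).sub (Real.hasDerivAt_sinh y)
    exact h2.congr_deriv (by ring)
  have mono : MonotoneOn (fun z : ℝ => z * Real.cosh z - Real.sinh z) (Set.Icc 0 x) := by
    apply monotoneOn_of_deriv_nonneg (convex_Icc 0 x)
    · exact Continuous.continuousOn (by continuity)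
    · intro y hy
      exact (hd y).differentiableAt.differentiableWithinAt
    · intro y hy
      rw [(hd y).deriv]
      rw [interior_Icc] at hy
      exact mul_nonneg hy.1.le (by simpa using Real.sinh_le_sinh.2 hy.1.le)
  have h0 : (0:ℝ) ∈ Set.Icc (0:ℝ) x := by constructor <;> simp [hx]
  have hxm : x ∈ Set.Icc (0:ℝ) x := by constructor <;> simp [hx]
  have := mono h0 hxm hx
  simpa using this

lemma logA {t : ℝ} (ht : 1 ≤ t) : 2*(t-1)/(t+1) ≤ Real.log t := by
  have ht0 : 0 < t := by linarith
  set u := Real.log t with hu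
  have hu0 : 0 ≤ u := Real.log_nonneg ht
  have hs := sinh_le_mul_cosh (by linarith : (0:ℝ) ≤ u/2)
  set a := Real.exp (u/2) with ha
  have ha0 : 0 < a := Real.exp_pos _
  have hsinh : Real.sinh (u/2) = (a - a⁻¹)/2 := by
    rw [Real.sinh_eq, Real.exp_neg]
  have hcosh : Real.cosh (u/2) = (a + a⁻¹)/2 := by
    rw [Real.cosh_eq, Real.exp_neg]
  have hta : t = a * a := by
    rw [ha, ← Real.exp_add]
    rw [show u/2 + u/2 = u by ring, hu, Real.exp_log ht0]
  rw [hsinh, hcosh] at hs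
  have hinv : a * a⁻¹ = 1 := mul_inv_cancel₀ ha0.ne'
  rw [div_le_iff₀ (by linarith : (0:ℝ) < t + 1)]
  nlinarith [hs, ha0, hinv, hta]

lemma logB {t : ℝ} (h0 : 0 < t) (h1 : t ≤ 1) : (t^2-1)/(2*t) ≤ Real.log t := by
  set u := -Real.log t with hu
  have hu0 : 0 ≤ u := by
    rw [hu]
    simp only [Left.nonneg_neg_iff]
    exact Real.log_nonpos h0.le h1
  have hs : u ≤ Real.sinh u := Real.self_le_sinh_iff.mpr hu0
  have hsinh : Real.sinh u = (t⁻¹ - t)/2 := by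
    rw [Real.sinh_eq, hu, neg_neg, Real.exp_log h0, Real.exp_neg, Real.exp_log h0]
  rw [hsinh, hu] at hs
  have hinv : t * t⁻¹ = 1 := mul_inv_cancel₀ h0.ne'
  rw [div_le_iff₀ (by linarith : (0:ℝ) < 2*t)]
  nlinarith [hs, h0, hinv]

lemma keyF {x y : ℝ} (hx : 0 ≤ x) (hy : 0 < y) :
    (x - y)^2 / (2*(x+y)) ≤ x * Real.log x - x * Real.log y - x + y := by
  rcases eq_or_lt_of_le hx with rfl | hx'
  · rw [Real.log_zero]
    rw [div_le_iff₀ (by linarith : (0:ℝ) < 2*(0+y))]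
    nlinarith
  rcases le_or_gt x y with hxy | hxy
  · have hB := logB (div_pos hx' hy) ((div_le_one hy).2 hxy)
    rw [Real.log_div hx'.ne' hy.ne'] at hB
    have h1 : x * (((x/y)^2 - 1)/(2*(x/y))) ≤ x * (Real.log x - Real.log y) :=
      mul_le_mul_of_nonneg_left hB hx
    have e1 : x * (((x/y)^2 - 1)/(2*(x/y))) = (x^2 - y^2)/(2*y) := by
      field_simp
    rw [e1] at h1
    have e2 : (x^2 - y^2)/(2*y) - x + y = (x-y)^2/(2*y) := by
      field_simp
      ring
    have h3 : (x-y)^2/(2*(x+y)) ≤ (x-y)^2/(2*y) := by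
      rw [div_le_div_iff₀ (by linarith) (by linarith)]
      nlinarith
    linarith [h3, h1, e2.symm.le]
  · have hA := logA (by rw [le_div_iff₀ hy]; linarith : (1:ℝ) ≤ x/y)
    rw [Real.log_div hx'.ne' hy.ne'] at hA
    have h1 : x * (2*((x/y)-1)/((x/y)+1)) ≤ x * (Real.log x - Real.log y) :=
      mul_le_mul_of_nonneg_left hA hx
    have e1 : x * (2*((x/y)-1)/((x/y)+1)) = 2*x*(x-y)/(x+y) := by
      have hne : x/y + 1 ≠ 0 := by positivity
      field_simp
    rw [e1] at h1
    have e2 : 2*x*(x-y)/(x+y) - x + y = (x-y)^2/(x+y) := by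
      field_simp
      ring
    have h3 : (x-y)^2/(2*(x+y)) ≤ (x-y)^2/(x+y) := by
      rw [div_le_div_iff₀ (by linarith) (by linarith)]
      nlinarith
    linarith [h3, h1, e2.symm.le]


lemma cs_bound {M : ℕ} (lam mu : Fin M → ℝ) (g c r : Fin M → Fin M → ℝ)
    (hlam : ∀ i, 0 ≤ lam i) (hmu : ∀ j, 0 < mu j)
    (hr : ∀ i j, r i j ^ 2 ≤ g i j * c i j)
    (hg0 : ∀ i j, 0 ≤ g i j) (hc0 : ∀ i j, 0 ≤ c i j)
    (hgrow : ∀ i, ∑ j, g i j = 1) (hgcol : ∀ j, ∑ i, g i j = 1)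
    (hlamS : ∑ i, lam i ≤ 1) (hmuS : ∑ j, mu j ≤ 1) :
    (∑ i, ∑ j, (lam i - mu j) * r i j) ^ 2 ≤
      4 * ∑ i, ∑ j, c i j * ((lam i - mu j) ^ 2 / (2 * (lam i + mu j))) := by
  have hq : ∀ i j, 0 < lam i + mu j := fun i j => add_pos_of_nonneg_of_pos (hlam i) (hmu j)
  set a : Fin M × Fin M → ℝ := fun p => Real.sqrt (g p.1 p.2 * (lam p.1 + mu p.2) / 2) with ha
  set b : Fin M × Fin M → ℝ :=
    fun p => |lam p.1 - mu p.2| * Real.sqrt (2 * c p.1 p.2 / (lam p.1 + mu p.2)) with hb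
  -- |the summand| ≤ a * b
  have key : ∀ p : Fin M × Fin M, |(lam p.1 - mu p.2) * r p.1 p.2| ≤ a p * b p := by
    rintro ⟨i, j⟩
    have hab : a (i,j) * b (i,j) = |lam i - mu j| * Real.sqrt (g i j * c i j) := by
      rw [ha, hb]
      have e1 : Real.sqrt (g i j * (lam i + mu j) / 2) * (|lam i - mu j| *
          Real.sqrt (2 * c i j / (lam i + mu j))) =
          |lam i - mu j| * (Real.sqrt (g i j * (lam i + mu j) / 2) *
            Real.sqrt (2 * c i j / (lam i + mu j))) := by ring
      have hne := (hq i j).ne'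
      rw [e1, ← Real.sqrt_mul (div_nonneg (mul_nonneg (hg0 i j) (hq i j).le) (by norm_num))]
      congr 2
      field_simp
    rw [abs_mul, hab]
    refine mul_le_mul_of_nonneg_left ?_ (abs_nonneg _)
    rw [show |r i j| = Real.sqrt (r i j ^ 2) by rw [Real.sqrt_sq_eq_abs]]
    exact Real.sqrt_le_sqrt (hr i j)
  -- sum over product type
  have hsum_eq : (∑ i, ∑ j, (lam i - mu j) * r i j) =
      ∑ p : Fin M × Fin M, (lam p.1 - mu p.2) * r p.1 p.2 := by
    rw [Fintype.sum_prod_type]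
  rw [hsum_eq]
  have h1 : (∑ p : Fin M × Fin M, (lam p.1 - mu p.2) * r p.1 p.2) ^ 2 ≤
      (∑ p : Fin M × Fin M, a p * b p) ^ 2 := by
    have habs : |∑ p : Fin M × Fin M, (lam p.1 - mu p.2) * r p.1 p.2| ≤
        ∑ p : Fin M × Fin M, a p * b p :=
      (Finset.abs_sum_le_sum_abs _ _).trans (Finset.sum_le_sum fun p _ => key p)
    calc (∑ p : Fin M × Fin M, (lam p.1 - mu p.2) * r p.1 p.2) ^ 2
        = |∑ p : Fin M × Fin M, (lam p.1 - mu p.2) * r p.1 p.2| ^ 2 := (sq_abs _).symm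
      _ ≤ (∑ p : Fin M × Fin M, a p * b p) ^ 2 := by
          apply pow_le_pow_left₀ (abs_nonneg _) habs
  have h2 := Finset.sum_mul_sq_le_sq_mul_sq Finset.univ a b
  have hA : (∑ p : Fin M × Fin M, a p ^ 2) ≤ 1 := by
    have e : ∀ p : Fin M × Fin M, a p ^ 2 = g p.1 p.2 * (lam p.1 + mu p.2) / 2 := by
      rintro ⟨i, j⟩
      rw [ha, Real.sq_sqrt (div_nonneg (mul_nonneg (hg0 i j) (hq i j).le) (by norm_num))]
    rw [Finset.sum_congr rfl fun p _ => e p]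
    rw [Fintype.sum_prod_type]
    have e2 : ∀ i, ∑ j, g i j * (lam i + mu j) / 2 =
        lam i / 2 + (∑ j, g i j * mu j) / 2 := by
      intro i
      have e0 : ∀ j, g i j * (lam i + mu j) / 2 = lam i * g i j / 2 + g i j * mu j / 2 :=
        fun j => by ring
      rw [Finset.sum_congr rfl fun j _ => e0 j, Finset.sum_add_distrib, ← Finset.sum_div,
        ← Finset.sum_div, ← Finset.mul_sum, hgrow i, mul_one]
    rw [Finset.sum_congr rfl fun i _ => e2 i, Finset.sum_add_distrib]
    have e3 : (∑ i, lam i / 2) ≤ 1/2 := by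
      rw [← Finset.sum_div]; linarith
    have e4 : (∑ i, (∑ j, g i j * mu j) / 2) ≤ 1/2 := by
      rw [← Finset.sum_div]
      have : (∑ i, ∑ j, g i j * mu j) = ∑ j, mu j := by
        rw [Finset.sum_comm]
        congr 1
        ext j
        rw [← Finset.sum_mul, hgcol j, one_mul]
      rw [this]; linarith
    linarith
  have hB : (∑ p : Fin M × Fin M, b p ^ 2) =
      4 * ∑ i, ∑ j, c i j * ((lam i - mu j) ^ 2 / (2 * (lam i + mu j))) := by
    have e : ∀ p : Fin M × Fin M, b p ^ 2 =
        4 * (c p.1 p.2 * ((lam p.1 - mu p.2) ^ 2 / (2 * (lam p.1 + mu p.2)))) := by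
      rintro ⟨i, j⟩
      have hne := (hq i j).ne'
      rw [hb, mul_pow, sq_abs, Real.sq_sqrt (div_nonneg (mul_nonneg (by norm_num) (hc0 i j)) (hq i j).le)]
      field_simp
      ring
    rw [Finset.sum_congr rfl fun p _ => e p, ← Finset.mul_sum, Fintype.sum_prod_type]
  have hBnn : 0 ≤ ∑ p : Fin M × Fin M, b p ^ 2 := Finset.sum_nonneg fun p _ => sq_nonneg _
  calc (∑ p : Fin M × Fin M, (lam p.1 - mu p.2) * r p.1 p.2) ^ 2
      ≤ (∑ p : Fin M × Fin M, a p * b p) ^ 2 := h1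
    _ ≤ (∑ p : Fin M × Fin M, a p ^ 2) * ∑ p : Fin M × Fin M, b p ^ 2 := h2
    _ ≤ 1 * ∑ p : Fin M × Fin M, b p ^ 2 := by
        apply mul_le_mul_of_nonneg_right hA hBnn
    _ = 4 * ∑ i, ∑ j, c i j * ((lam i - mu j) ^ 2 / (2 * (lam i + mu j))) := by
        rw [one_mul, hB]

lemma real_part {M : ℕ} (lam mu : Fin M → ℝ) (c g r : Fin M → Fin M → ℝ) (lh mh : ℝ)
    (hlam : ∀ i, 0 ≤ lam i) (hmu : ∀ j, 0 < mu j) (hlh : 0 ≤ lh) (hmh : 0 < mh)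
    (hc0 : ∀ i j, 0 ≤ c i j) (hg0 : ∀ i j, 0 ≤ g i j)
    (hcrow : ∀ i, ∑ j, c i j = 1) (hccol : ∀ j, ∑ i, c i j = 1)
    (hgrow : ∀ i, ∑ j, g i j = 1) (hgcol : ∀ j, ∑ i, g i j = 1)
    (hr : ∀ i j, r i j ^ 2 ≤ g i j * c i j)
    (hlamS : ∑ i, lam i + lh = 1) (hmuS : ∑ j, mu j + mh = 1) :
    (1/4) * (∑ i, ∑ j, (lam i - mu j) * r i j) ^ 2 ≤
      (∑ i, lam i * Real.log (lam i)) - (∑ j, Real.log (mu j) * ∑ i, lam i * c i j)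
        + lh * Real.log (lh / mh) := by
  have hFhat : 0 ≤ lh * Real.log lh - lh * Real.log mh - lh + mh := by
    have h1 := keyF hlh hmh
    have h2 : 0 ≤ (lh - mh)^2 / (2*(lh+mh)) :=
      div_nonneg (sq_nonneg _) (by linarith)
    linarith
  have hpoint : ∀ i j, c i j * ((lam i - mu j)^2/(2*(lam i + mu j))) ≤
      c i j * (lam i * Real.log (lam i) - lam i * Real.log (mu j) - lam i + mu j) :=
    fun i j => mul_le_mul_of_nonneg_left (keyF (hlam i) (hmu j)) (hc0 i j)
  have hS2 : ∑ i, ∑ j, c i j * ((lam i - mu j)^2/(2*(lam i + mu j))) ≤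
      ∑ i, ∑ j, c i j * (lam i * Real.log (lam i) - lam i * Real.log (mu j) - lam i + mu j) :=
    Finset.sum_le_sum fun i _ => Finset.sum_le_sum fun j _ => hpoint i j
  have hexp : (∑ i, ∑ j, c i j * (lam i * Real.log (lam i) - lam i * Real.log (mu j)
        - lam i + mu j))
      = (∑ i, lam i * Real.log (lam i)) - (∑ j, Real.log (mu j) * ∑ i, lam i * c i j)
        - (∑ i, lam i) + (∑ j, mu j) := by
    have e1 : ∀ i, (∑ j, c i j * (lam i * Real.log (lam i) - lam i * Real.log (mu j)
          - lam i + mu j))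
        = lam i * Real.log (lam i) - (∑ j, Real.log (mu j) * (lam i * c i j))
          - lam i + (∑ j, c i j * mu j) := by
      intro i
      have e0 : ∀ j, c i j * (lam i * Real.log (lam i) - lam i * Real.log (mu j)
            - lam i + mu j)
          = (lam i * Real.log (lam i)) * c i j - Real.log (mu j) * (lam i * c i j)
            - lam i * c i j + c i j * mu j := fun j => by ring
      rw [Finset.sum_congr rfl fun j _ => e0 j, Finset.sum_add_distrib,
        Finset.sum_sub_distrib, Finset.sum_sub_distrib, ← Finset.mul_sum, ← Finset.mul_sum,
        hcrow i, mul_one, mul_one]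
    rw [Finset.sum_congr rfl fun i _ => e1 i, Finset.sum_add_distrib,
      Finset.sum_sub_distrib, Finset.sum_sub_distrib]
    congr 1
    congr 1
    · congr 1
      rw [Finset.sum_comm]
      exact Finset.sum_congr rfl fun j _ => by rw [← Finset.mul_sum]
    · rw [Finset.sum_comm]
      exact Finset.sum_congr rfl fun j _ => by rw [← Finset.sum_mul, hccol j, one_mul]
  have hlog : lh * Real.log (lh / mh) = lh * Real.log lh - lh * Real.log mh := by
    rcases eq_or_lt_of_le hlh with h0 | h0
    · rw [← h0]; ring
    · rw [Real.log_div h0.ne' hmh.ne', mul_sub]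
  have hcs := cs_bound lam mu g c r hlam hmu hr hg0 hc0 hgrow hgcol (by linarith) (by linarith)
  linarith [hcs, hS2, hexp.le, hexp.ge, hFhat, hlog.le, hlog.ge]

open Matrix in
lemma trace_mul_diag {M : ℕ} (A : Matrix (Fin M) (Fin M) ℂ) (d : Fin M → ℂ) :
    (A * Matrix.diagonal d).trace = ∑ i, A i i * d i := by
  simp [Matrix.trace, Matrix.diag, Matrix.mul_diagonal]

open Matrix in
lemma trace_conj {M : ℕ} {S : Matrix (Fin M) (Fin M) ℂ}
    (hS : S ∈ Matrix.unitaryGroup (Fin M) ℂ) (d : Fin M → ℂ) :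
    (S * Matrix.diagonal d * star S).trace = ∑ i, d i := by
  rw [Matrix.trace_mul_cycle, hS.1, one_mul, Matrix.trace_diagonal]

open Matrix in
lemma trace_mul_conj_diag {M : ℕ} (E : Matrix (Fin M) (Fin M) ℂ)
    {S : Matrix (Fin M) (Fin M) ℂ} (hS : S ∈ Matrix.unitaryGroup (Fin M) ℂ)
    (d : Fin M → ℂ) :
    (E * (S * Matrix.diagonal d * star S)).trace = ∑ i, d i * (star S * E * S) i i := by
  have e1 : E * (S * Matrix.diagonal d * star S) = (E * S * Matrix.diagonal d) * star S := by
    simp only [mul_assoc]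
  rw [e1, Matrix.trace_mul_comm, ← mul_assoc, ← mul_assoc, trace_mul_diag]
  congr 1
  ext i
  rw [mul_comm]

open Matrix in
lemma conj_entry {M : ℕ} (W : Matrix (Fin M) (Fin M) ℂ) (d : Fin M → ℂ) (j : Fin M) :
    (star W * Matrix.diagonal d * W) j j = ∑ i, d i * (star (W i j) * W i j) := by
  rw [Matrix.mul_apply]
  congr 1
  ext i
  rw [Matrix.mul_diagonal, Matrix.star_apply]
  ring

open Matrix in
lemma row_sum_normSq {M : ℕ} {Q : Matrix (Fin M) (Fin M) ℂ}
    (hQ : Q ∈ Matrix.unitaryGroup (Fin M) ℂ) (i : Fin M) :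
    ∑ j, Complex.normSq (Q i j) = 1 := by
  have h2 : (Q * star Q) i i = 1 := by rw [hQ.2]; simp
  rw [Matrix.mul_apply] at h2
  have h3 : ∀ j, Q i j * (star Q) j i = (Complex.normSq (Q i j) : ℂ) := by
    intro j
    rw [Matrix.star_apply, ← Complex.mul_conj]
    rfl
  rw [Finset.sum_congr rfl (fun j _ => h3 j)] at h2
  have := congrArg Complex.re h2
  simpa using this

open Matrix in
lemma col_sum_normSq {M : ℕ} {Q : Matrix (Fin M) (Fin M) ℂ}
    (hQ : Q ∈ Matrix.unitaryGroup (Fin M) ℂ) (j : Fin M) :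
    ∑ i, Complex.normSq (Q i j) = 1 := by
  have h2 : (star Q * Q) j j = 1 := by rw [hQ.1]; simp
  rw [Matrix.mul_apply] at h2
  have h3 : ∀ i, (star Q) j i * Q i j = (Complex.normSq (Q i j) : ℂ) := by
    intro i
    rw [Matrix.star_apply, mul_comm, ← Complex.mul_conj]
    rfl
  rw [Finset.sum_congr rfl (fun i _ => h3 i)] at h2
  have := congrArg Complex.re h2
  simpa using this

open Matrix in
lemma conj_spectral {M : ℕ} {A S : Matrix (Fin M) (Fin M) ℂ} {d : Fin M → ℂ}
    (hS : S ∈ Matrix.unitaryGroup (Fin M) ℂ)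
    (hA : A = S * Matrix.diagonal d * star S) :
    star S * A * S = Matrix.diagonal d := by
  rw [hA]
  simp only [← mul_assoc]
  rw [hS.1, one_mul, mul_assoc, hS.1, mul_one]

theorem stmt14 {M : ℕ} (Xs X : Matrix (Fin M) (Fin M) ℂ)
    (hXs : Xs.PosSemidef) (hXsTr : Xs.trace.re ≤ 1)
    (hX : X.PosDef) (hXTr : X.trace.re < 1) :
    (1 / 4) * (traceNorm (Xs - X)) ^ 2 ≤
      (Xs * (matLog Xs - matLog X)).trace.re +
        (1 - Xs.trace.re) * Real.log ((1 - Xs.trace.re) / (1 - X.trace.re)) := by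
  classical
  have hA : Xs.IsHermitian := hXs.1
  have hB : X.IsHermitian := hX.1
  have hD : (Xs - X).IsHermitian := hA.sub hB
  set lam : Fin M → ℝ := hA.eigenvalues with hlam_def
  set mu : Fin M → ℝ := hB.eigenvalues with hmu_def
  set nu : Fin M → ℝ := hD.eigenvalues with hnu_def
  set U : Matrix (Fin M) (Fin M) ℂ := (hA.eigenvectorUnitary : Matrix (Fin M) (Fin M) ℂ)
    with hU_def
  set V : Matrix (Fin M) (Fin M) ℂ := (hB.eigenvectorUnitary : Matrix (Fin M) (Fin M) ℂ)
    with hV_def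
  set T : Matrix (Fin M) (Fin M) ℂ := (hD.eigenvectorUnitary : Matrix (Fin M) (Fin M) ℂ)
    with hT_def
  have hU : U ∈ Matrix.unitaryGroup (Fin M) ℂ := hA.eigenvectorUnitary.2
  have hV : V ∈ Matrix.unitaryGroup (Fin M) ℂ := hB.eigenvectorUnitary.2
  have hT : T ∈ Matrix.unitaryGroup (Fin M) ℂ := hD.eigenvectorUnitary.2
  have hXsSpec : Xs = U * Matrix.diagonal (fun i => (lam i : ℂ)) * star U :=
    hA.spectral_theorem
  have hXSpec : X = V * Matrix.diagonal (fun j => (mu j : ℂ)) * star V :=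
    hB.spectral_theorem
  have hDSpec : Xs - X = T * Matrix.diagonal (fun k => (nu k : ℂ)) * star T :=
    hD.spectral_theorem
  have hlog1 : matLog Xs = U * Matrix.diagonal (fun i => (Real.log (lam i) : ℂ)) * star U := by
    simp only [matLog]
    rw [dif_pos hA]
  have hlog2 : matLog X = V * Matrix.diagonal (fun j => (Real.log (mu j) : ℂ)) * star V := by
    simp only [matLog]
    rw [dif_pos hB]
  -- W and c
  set W : Matrix (Fin M) (Fin M) ℂ := star U * V with hW_def
  have hW : W ∈ Matrix.unitaryGroup (Fin M) ℂ := mul_mem (Unitary.star_mem hU) hV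
  set c : Fin M → Fin M → ℝ := fun i j => Complex.normSq (W i j) with hc_def
  -- sign function and E
  set s : Fin M → ℝ := fun k => if 0 ≤ nu k then 1 else -1 with hs_def
  have hs_sq : ∀ k, (s k : ℂ) * (s k : ℂ) = 1 := by
    intro k
    by_cases h : 0 ≤ nu k <;> simp [hs_def, h] <;> norm_num
  have hs_nu : ∀ k, s k * nu k = |nu k| := by
    intro k
    by_cases h : 0 ≤ nu k
    · simp [hs_def, h, abs_of_nonneg h]
    · push_neg at h
      simp [hs_def, not_le.mpr h, abs_of_neg h]
  have hDstar : star (Matrix.diagonal (fun k => (s k : ℂ))) =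
      Matrix.diagonal (fun k => (s k : ℂ)) := by
    have hv : star (fun k => (s k : ℂ)) = fun k => (s k : ℂ) := by
      funext k
      exact Complex.conj_ofReal _
    rw [Matrix.star_eq_conjTranspose, Matrix.diagonal_conjTranspose, hv]
  have hdgS : Matrix.diagonal (fun k => (s k : ℂ)) ∈ Matrix.unitaryGroup (Fin M) ℂ := by
    rw [Matrix.mem_unitaryGroup_iff, hDstar, Matrix.diagonal_mul_diagonal]
    have hv : (fun i => (s i : ℂ) * (s i : ℂ)) = fun _ : Fin M => (1 : ℂ) :=
      funext fun k => hs_sq k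
    rw [hv]
    exact Matrix.diagonal_one
  set E : Matrix (Fin M) (Fin M) ℂ := T * Matrix.diagonal (fun k => (s k : ℂ)) * star T
    with hE_def
  have hE : E ∈ Matrix.unitaryGroup (Fin M) ℂ := mul_mem (mul_mem hT hdgS) (Unitary.star_mem hT)
  have hEstar : star E = E := by
    rw [hE_def, star_mul, star_mul, star_star, hDstar, ← mul_assoc]
  set G : Matrix (Fin M) (Fin M) ℂ := star U * E * V with hG_def
  have hG : G ∈ Matrix.unitaryGroup (Fin M) ℂ :=
    mul_mem (mul_mem (Unitary.star_mem hU) hE) hV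
  set r : Fin M → Fin M → ℝ := fun i j => (G i j * star (W i j)).re with hrr_def
  -- traces
  have hdiagXs : star U * Xs * U = Matrix.diagonal (fun i => (lam i : ℂ)) :=
    conj_spectral hU hXsSpec
  have hdiagE : star T * E * T = Matrix.diagonal (fun k => (s k : ℂ)) :=
    conj_spectral hT hE_def
  have htr1 : (Xs * matLog Xs).trace = ((∑ i, lam i * Real.log (lam i) : ℝ) : ℂ) := by
    rw [hlog1, trace_mul_conj_diag Xs hU, hdiagXs]
    simp only [Matrix.diagonal_apply_eq]
    push_cast
    try exact Finset.sum_congr rfl fun i _ => by ring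
  have hVXsV : star V * Xs * V = star W * Matrix.diagonal (fun i => (lam i : ℂ)) * W := by
    rw [hXsSpec, hW_def, star_mul, star_star]
    simp only [← mul_assoc]
  have htr2 : (Xs * matLog X).trace
      = ((∑ j, Real.log (mu j) * ∑ i, lam i * c i j : ℝ) : ℂ) := by
    rw [hlog2, trace_mul_conj_diag Xs hV, ]
    have hent : ∀ j, (star V * Xs * V) j j = ((∑ i, lam i * c i j : ℝ) : ℂ) := by
      intro j
      rw [hVXsV, conj_entry]
      push_cast
      refine Finset.sum_congr rfl fun i _ => ?_
      have hws : star (W i j) * W i j = ((c i j : ℝ) : ℂ) := by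
        rw [mul_comm, ← Complex.mul_conj]
        rfl
      rw [hws]
      try push_cast
      try ring
    simp only [hent]
    push_cast
    exact Finset.sum_congr rfl fun j _ => by ring
  have htrXs : Xs.trace = ((∑ i, lam i : ℝ) : ℂ) := by
    conv_lhs => rw [hXsSpec]
    rw [trace_conj hU]
    push_cast
    try rfl
  have htrX : X.trace = ((∑ j, mu j : ℝ) : ℂ) := by
    conv_lhs => rw [hXSpec]
    rw [trace_conj hV]
    push_cast
    try rfl
  have hTrXsRe : Xs.trace.re = ∑ i, lam i := by rw [htrXs]; exact Complex.ofReal_re _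
  have hTrXRe : X.trace.re = ∑ j, mu j := by rw [htrX]; exact Complex.ofReal_re _
  -- trace-norm identity
  have hVVU : V * (star V * U) = U := by rw [← mul_assoc, hV.2, one_mul]
  have hUUV : U * (star U * V) = V := by rw [← mul_assoc, hU.2, one_mul]
  have hUEU : star U * E * U = G * star W := by
    rw [hG_def, hW_def, star_mul, star_star]
    calc star U * E * U = star U * E * (V * (star V * U)) := by rw [hVVU]
      _ = star U * E * V * (star V * U) := (mul_assoc _ _ _).symm
  have hVEV : star V * E * V = star G * W := by
    rw [hG_def, hW_def, star_mul, star_mul, star_star, hEstar]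
    calc star V * E * V = star V * E * (U * (star U * V)) := by rw [hUUV]
      _ = star V * (E * (U * (star U * V))) := mul_assoc _ _ _
      _ = star V * ((E * U) * (star U * V)) := by rw [mul_assoc E U]
      _ = (star V * (E * U)) * (star U * V) := (mul_assoc _ _ _).symm
  have hEXs : (E * Xs).trace = ∑ i, (lam i : ℂ) * ∑ j, G i j * star (W i j) := by
    conv_lhs => rw [hXsSpec]
    rw [trace_mul_conj_diag E hU]
    refine Finset.sum_congr rfl fun i _ => ?_
    rw [hUEU, Matrix.mul_apply]
    congr 1
    try exact Finset.sum_congr rfl fun j _ => by rw [Matrix.star_apply]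
  have hEX : (E * X).trace = ∑ j, (mu j : ℂ) * ∑ i, star (G i j) * W i j := by
    conv_lhs => rw [hXSpec]
    rw [trace_mul_conj_diag E hV]
    refine Finset.sum_congr rfl fun j _ => ?_
    rw [hVEV, Matrix.mul_apply]
    congr 1
    try exact Finset.sum_congr rfl fun i _ => by rw [Matrix.star_apply]
  have htnC : (E * (Xs - X)).trace = ((∑ k, |nu k| : ℝ) : ℂ) := by
    conv_lhs => rw [hDSpec]
    rw [trace_mul_conj_diag E hT, hdiagE]
    simp only [Matrix.diagonal_apply_eq]
    push_cast
    refine Finset.sum_congr rfl fun k _ => ?_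
    rw [← hs_nu k]
    push_cast
    ring
  have hsub : (E * (Xs - X)).trace = (E * Xs).trace - (E * X).trace := by
    rw [mul_sub, Matrix.trace_sub]
  have hre : ∀ z w : ℂ, (star z * w).re = (z * star w).re := by
    intro z w
    have h : star z * w = star (z * star w) := by rw [star_mul', star_star]
    rw [h]
    exact Complex.conj_re _
  have htnR : (∑ k, |nu k|) = ∑ i, ∑ j, (lam i - mu j) * r i j := by
    have h0 : ((∑ k, |nu k| : ℝ) : ℂ).re = ((E * Xs).trace - (E * X).trace).re := by
      rw [← htnC, hsub]
    rw [Complex.ofReal_re, hEXs, hEX, Complex.sub_re, Complex.re_sum, Complex.re_sum] at h0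
    have e1 : ∀ i, ((lam i : ℂ) * ∑ j, G i j * star (W i j)).re = ∑ j, lam i * r i j := by
      intro i
      rw [Complex.re_ofReal_mul, Complex.re_sum, Finset.mul_sum]
    have e2 : ∀ j, ((mu j : ℂ) * ∑ i, star (G i j) * W i j).re = ∑ i, mu j * r i j := by
      intro j
      rw [Complex.re_ofReal_mul, Complex.re_sum, Finset.mul_sum]
      exact Finset.sum_congr rfl fun i _ => by rw [hre (G i j) (W i j)]
    rw [Finset.sum_congr rfl fun i _ => e1 i, Finset.sum_congr rfl fun j _ => e2 j] at h0
    have e3 : ∑ i, ∑ j, (lam i - mu j) * r i j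
        = (∑ i, ∑ j, lam i * r i j) - (∑ j, ∑ i, mu j * r i j) := by
      rw [show (∑ j, ∑ i, mu j * r i j) = ∑ i, ∑ j, mu j * r i j from Finset.sum_comm,
        ← Finset.sum_sub_distrib]
      refine Finset.sum_congr rfl fun i _ => ?_
      rw [← Finset.sum_sub_distrib]
      exact Finset.sum_congr rfl fun j _ => by ring
    rw [e3]
    exact h0
  -- bounds on r
  have hrb : ∀ i j, r i j ^ 2 ≤ Complex.normSq (G i j) * c i j := by
    intro i j
    have h1 : r i j ^ 2 ≤ Complex.normSq (G i j * star (W i j)) := by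
      have h2 := Complex.normSq_apply (G i j * star (W i j))
      have h3 : r i j = (G i j * star (W i j)).re := rfl
      nlinarith [sq_nonneg ((G i j * star (W i j)).im)]
    rw [Complex.normSq_mul] at h1
    have h4 : Complex.normSq (star (W i j)) = c i j := Complex.normSq_conj _
    rwa [h4] at h1
  -- row and column sums
  have hcrow : ∀ i, ∑ j, c i j = 1 := fun i => row_sum_normSq hW i
  have hccol : ∀ j, ∑ i, c i j = 1 := fun j => col_sum_normSq hW j
  have hgrow : ∀ i, ∑ j, Complex.normSq (G i j) = 1 := fun i => row_sum_normSq hG i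
  have hgcol : ∀ j, ∑ i, Complex.normSq (G i j) = 1 := fun j => col_sum_normSq hG j
  have hc0 : ∀ i j, 0 ≤ c i j := fun i j => Complex.normSq_nonneg _
  have hg0 : ∀ i j, 0 ≤ Complex.normSq (G i j) := fun i j => Complex.normSq_nonneg _
  have hlamnn : ∀ i, 0 ≤ lam i := fun i => hXs.eigenvalues_nonneg i
  have hmupos : ∀ j, 0 < mu j := fun j => hX.eigenvalues_pos j
  -- rewrite the goal
  have htn : traceNorm (Xs - X) = ∑ i, ∑ j, (lam i - mu j) * r i j := by
    simp only [traceNorm]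
    rw [dif_pos hD]
    exact htnR
  have hgoal1 : (Xs * (matLog Xs - matLog X)).trace.re
      = (∑ i, lam i * Real.log (lam i)) - (∑ j, Real.log (mu j) * ∑ i, lam i * c i j) := by
    rw [mul_sub, Matrix.trace_sub, Complex.sub_re, htr1, htr2, Complex.ofReal_re,
      Complex.ofReal_re]
  rw [htn, hgoal1, hTrXsRe, hTrXRe]
  have hlamS : ∑ i, lam i ≤ 1 := by rw [← hTrXsRe]; exact hXsTr
  have hmuS : ∑ j, mu j < 1 := by rw [← hTrXRe]; exact hXTr
  have := real_part lam mu c (fun i j => Complex.normSq (G i j)) r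
    (1 - ∑ i, lam i) (1 - ∑ j, mu j)
    hlamnn hmupos (by linarith) (by linarith) hc0 hg0 hcrow hccol hgrow hgcol hrb
    (by ring) (by ring)
  convert this using 2
  try norm_num
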